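/- Let Δ ≥ 2 be the maximum vertex degree of G. If the arrival rate vector satisfies ν ∈ (1/Δ)Λ°, and λ is a vector of fugacities such that s_i(λ) = ν_i for all links i, then λ_i ≤ 1/(Δ−1) for every i. -/

import Mathlib

open Finset

variable {V : Type*} [Fintype V] [DecidableEq V]

/-- A finite set of vertices is independent in `G`. -/
def IsInd (G : SimpleGraph V) [DecidableRel G.Adj] (s : Finset V) : Prop :=
  ∀ v ∈ s, ∀ w ∈ s, ¬ G.Adj v w

instance (G : SimpleGraph V) [DecidableRel G.Adj] (s : Finset V) :
    Decidable (IsInd G s) := by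
  unfold IsInd; infer_instance

/-- The indicator vector of a finite set of vertices. -/
def indVec (s : Finset V) : V → ℝ := fun v => if v ∈ s then 1 else 0

/-- The set `Ω` of feasible schedules, as indicator vectors of independent sets. -/
def schedSet (G : SimpleGraph V) [DecidableRel G.Adj] : Set (V → ℝ) :=
  {x | ∃ s : Finset V, IsInd G s ∧ x = indVec s}

/-- `Co(Ω)`: the convex hull of the feasible schedules. -/
def coSched (G : SimpleGraph V) [DecidableRel G.Adj] : Set (V → ℝ) :=
  convexHull ℝ (schedSet G)

/-- The capacity region `Λ° = {ν ≥ 0 : ∃ μ ∈ Co(Ω), ν < μ}`. -/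
def capIntr (G : SimpleGraph V) [DecidableRel G.Adj] : Set (V → ℝ) :=
  {ν | (∀ i, 0 ≤ ν i) ∧ ∃ μ ∈ coSched G, ∀ i, ν i < μ i}

/-- `Λ = {ν ≥ 0 : ν ∈ Co(Ω)}`. -/
def capCl (G : SimpleGraph V) [DecidableRel G.Adj] : Set (V → ℝ) :=
  {ν | (∀ i, 0 ≤ ν i) ∧ ν ∈ coSched G}

/-- The product-form distribution on independent sets with fugacities `lam`. -/
noncomputable def prodForm (G : SimpleGraph V) [DecidableRel G.Adj]
    (lam : V → ℝ) (σ : Finset V) : ℝ :=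
  if IsInd G σ then
    (∏ v ∈ σ, lam v) / (∑ σ' ∈ univ.filter (fun s => IsInd G s), ∏ v ∈ σ', lam v)
  else 0

/-- The stationary service rate of link `i` under the product-form distribution. -/
noncomputable def serviceRate (G : SimpleGraph V) [DecidableRel G.Adj]
    (lam : V → ℝ) (i : V) : ℝ :=
  ∑ σ ∈ univ.filter (fun s : Finset V => i ∈ s), prodForm G lam σ

/-- The concave function `F(r;ν) = Σ_i ν_i r_i − log Σ_{σ∈Ω} exp(Σ_{i∈σ} r_i)`. -/
noncomputable def Ffun (G : SimpleGraph V) [DecidableRel G.Adj]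
    (r ν : V → ℝ) : ℝ :=
  ∑ i : V, ν i * r i -
    Real.log (∑ σ ∈ univ.filter (fun s => IsInd G s), Real.exp (∑ i ∈ σ, r i))

/-- The interference degree of a vertex: the maximum number of members of its
neighborhood that can be simultaneously active (i.e. the maximum size of an
independent subset of its neighborhood). -/
def intDeg (G : SimpleGraph V) [DecidableRel G.Adj] (i : V) : ℕ :=
  (((G.neighborFinset i).powerset.filter (fun s => IsInd G s)).sup Finset.card)

/-- The interference degree of the graph. -/
def intDegG (G : SimpleGraph V) [DecidableRel G.Adj] : ℕ :=
  univ.sup (intDeg G)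

lemma coSched_nbhd_bound (G : SimpleGraph V) [DecidableRel G.Adj] (i : V)
    (x : V → ℝ) (hx : x ∈ coSched G) :
    ∑ j ∈ G.neighborFinset i, x j + (G.maxDegree : ℝ) * x i ≤ (G.maxDegree : ℝ) := by
  have hsub : schedSet G ⊆ {y : V → ℝ |
      ∑ j ∈ G.neighborFinset i, y j + (G.maxDegree : ℝ) * y i ≤ (G.maxDegree : ℝ)} := by
    rintro y ⟨s, hsInd, rfl⟩
    simp only [Set.mem_setOf_eq, indVec]
    by_cases hi : i ∈ s
    · have h0 : ∀ j ∈ G.neighborFinset i, (if j ∈ s then (1:ℝ) else 0) = 0 := by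
        intro j hj
        have hjs : j ∉ s := fun hjs =>
          hsInd i hi j hjs (by rwa [SimpleGraph.mem_neighborFinset] at hj)
        simp [hjs]
      rw [Finset.sum_congr rfl h0]
      simp [hi]
    · have h1 : ∑ j ∈ G.neighborFinset i, (if j ∈ s then (1:ℝ) else 0)
          ≤ ∑ j ∈ G.neighborFinset i, (1:ℝ) := by
        apply Finset.sum_le_sum; intro j _; split_ifs <;> norm_num
      have h2 : (∑ j ∈ G.neighborFinset i, (1:ℝ)) = (G.degree i : ℝ) := by
        simp [SimpleGraph.card_neighborFinset_eq_degree]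
      have h3 : (G.degree i : ℝ) ≤ (G.maxDegree : ℝ) := by
        exact_mod_cast G.degree_le_maxDegree i
      simp only [hi, if_false]
      rw [h2] at h1
      linarith
  have hconv : Convex ℝ {y : V → ℝ |
      ∑ j ∈ G.neighborFinset i, y j + (G.maxDegree : ℝ) * y i ≤ (G.maxDegree : ℝ)} := by
    intro y hy z hz a b ha hb hab
    simp only [Set.mem_setOf_eq] at hy hz ⊢
    simp only [Pi.add_apply, Pi.smul_apply, smul_eq_mul]
    rw [show ∑ j ∈ G.neighborFinset i, (a * y j + b * z j)
        = a * ∑ j ∈ G.neighborFinset i, y j + b * ∑ j ∈ G.neighborFinset i, z j by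
      rw [Finset.sum_add_distrib, Finset.mul_sum, Finset.mul_sum]]
    nlinarith [mul_le_mul_of_nonneg_left hy ha, mul_le_mul_of_nonneg_left hz hb]
  exact convexHull_min hsub hconv hx

/-- Corollary 4 of the paper: if `Δ ≥ 2` is the maximum vertex
degree, `ν ∈ (1/Δ)Λ°`, and the fugacities `λ` give service rates exactly equal
to `ν`, then `λ_i ≤ 1/(Δ-1)` for every link `i`. -/
theorem fugacity_bound_maxDegree
    {V : Type*} [Fintype V] [DecidableEq V]
    (G : SimpleGraph V) [DecidableRel G.Adj]
    (hΔ : 2 ≤ G.maxDegree)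
    (ν : V → ℝ)
    (hν : ∃ μ ∈ capIntr G, ν = fun i => (1 / (G.maxDegree : ℝ)) * μ i)
    (lam : V → ℝ) (hlam : ∀ i, 0 < lam i)
    (hs : ∀ i, serviceRate G lam i = ν i) :
    ∀ i, lam i ≤ 1 / ((G.maxDegree : ℝ) - 1) := by
  intro i
  obtain ⟨μ, ⟨hμ0, μ'', hμco, hμlt⟩, hνdef⟩ := hν
  have hΔR : (2:ℝ) ≤ (G.maxDegree : ℝ) := by exact_mod_cast hΔ
  have hΔpos : (0:ℝ) < (G.maxDegree : ℝ) := by linarith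
  set Ω : Finset (Finset V) := univ.filter (fun s : Finset V => IsInd G s) with hΩdef
  set Z : ℝ := ∑ σ ∈ Ω, ∏ v ∈ σ, lam v with hZdef
  have hppos : ∀ σ : Finset V, 0 < ∏ v ∈ σ, lam v :=
    fun σ => Finset.prod_pos fun v _ => hlam v
  have hemptyΩ : (∅ : Finset V) ∈ Ω := by rw [hΩdef, Finset.mem_filter]; exact ⟨Finset.mem_univ _, by simp [IsInd]⟩
  have hZpos : 0 < Z := Finset.sum_pos (fun σ _ => hppos σ) ⟨∅, hemptyΩ⟩
  have hZne : Z ≠ 0 := ne_of_gt hZpos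
  -- service rate formula
  have hsr : ∀ j, serviceRate G lam j
      = (∑ σ ∈ Ω.filter (fun s => j ∈ s), ∏ v ∈ σ, lam v) / Z := by
    intro j
    unfold serviceRate prodForm
    rw [← hΩdef, ← hZdef, ← Finset.sum_filter, Finset.filter_comm, ← Finset.sum_div]
  have hNj : ∀ j, ∑ σ ∈ Ω.filter (fun s => j ∈ s), ∏ v ∈ σ, lam v
      = serviceRate G lam j * Z := by
    intro j; rw [hsr j, div_mul_cancel₀ _ hZne]
  set K : Finset V := G.neighborFinset i with hK
  set B : ℝ := ∑ σ ∈ Ω.filter (fun s => i ∉ s ∧ ∀ j ∈ K, j ∉ s), ∏ v ∈ σ, lam v with hB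
  have hBpos : 0 < B := by
    refine Finset.sum_pos (fun σ _ => hppos σ) ⟨∅, ?_⟩
    simp only [Finset.mem_filter]; refine ⟨?_, by simp, by simp⟩; rw [hΩdef, Finset.mem_filter]; exact ⟨Finset.mem_univ _, by simp [IsInd]⟩
  -- N_i = lam i * B
  have hNi : ∑ σ ∈ Ω.filter (fun s => i ∈ s), ∏ v ∈ σ, lam v = lam i * B := by
    rw [hB, Finset.mul_sum]
    refine Finset.sum_nbij' (fun σ => σ.erase i) (fun τ => insert i τ) ?_ ?_ ?_ ?_ ?_
    · intro σ hσ
      rw [Finset.mem_filter] at hσ ⊢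
      obtain ⟨hσΩ, hiσ⟩ := hσ
      rw [hΩdef, Finset.mem_filter] at hσΩ ⊢
      refine ⟨⟨Finset.mem_univ _, fun v hv w hw => hσΩ.2 v (Finset.erase_subset _ _ hv)
        w (Finset.erase_subset _ _ hw)⟩, Finset.notMem_erase _ _, ?_⟩
      intro j hj hjσ
      exact hσΩ.2 i hiσ j (Finset.erase_subset _ _ hjσ)
        (by rwa [hK, SimpleGraph.mem_neighborFinset] at hj)
    · intro τ hτ
      rw [Finset.mem_filter] at hτ ⊢
      obtain ⟨hτΩ, hiτ, hnbτ⟩ := hτ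
      rw [hΩdef, Finset.mem_filter] at hτΩ ⊢
      refine ⟨⟨Finset.mem_univ _, ?_⟩, Finset.mem_insert_self _ _⟩
      intro v hv w hw hadj
      rcases Finset.mem_insert.mp hv with rfl | hv' <;>
        rcases Finset.mem_insert.mp hw with rfl | hw'
      · exact G.ne_of_adj hadj rfl
      · exact hnbτ w (by rwa [hK, SimpleGraph.mem_neighborFinset]) hw'
      · exact hnbτ v (by rw [hK, SimpleGraph.mem_neighborFinset]; exact hadj.symm) hv'
      · exact hτΩ.2 v hv' w hw' hadj
    · intro σ hσ
      rw [Finset.mem_filter] at hσ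
      exact Finset.insert_erase hσ.2
    · intro τ hτ
      rw [Finset.mem_filter] at hτ
      exact Finset.erase_insert hτ.2.1
    · intro σ hσ
      rw [Finset.mem_filter] at hσ
      exact (Finset.mul_prod_erase σ lam hσ.2).symm
  -- union bound
  set K' : Finset V := insert i K with hK'
  have hZsplit : B + ∑ σ ∈ Ω.filter (fun s => ¬(i ∉ s ∧ ∀ j ∈ K, j ∉ s)), ∏ v ∈ σ, lam v
      = Z := by
    rw [hB, hZdef]
    exact Finset.sum_filter_add_sum_filter_not Ω _ _
  have hR : ∑ σ ∈ Ω.filter (fun s => ¬(i ∉ s ∧ ∀ j ∈ K, j ∉ s)), ∏ v ∈ σ, lam v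
      ≤ ∑ j ∈ K', ∑ σ ∈ Ω.filter (fun s => j ∈ s), ∏ v ∈ σ, lam v := by
    calc ∑ σ ∈ Ω.filter (fun s => ¬(i ∉ s ∧ ∀ j ∈ K, j ∉ s)), ∏ v ∈ σ, lam v
        ≤ ∑ σ ∈ Ω.filter (fun s => ¬(i ∉ s ∧ ∀ j ∈ K, j ∉ s)),
            ∑ j ∈ K', (if j ∈ σ then ∏ v ∈ σ, lam v else 0) := by
          apply Finset.sum_le_sum
          intro σ hσ
          rw [Finset.mem_filter] at hσ
          push_neg at hσ
          obtain ⟨hσΩ, hcond⟩ := hσ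
          have : ∃ j₀ ∈ K', j₀ ∈ σ := by
            by_cases hi : i ∈ σ
            · exact ⟨i, Finset.mem_insert_self _ _, hi⟩
            · obtain ⟨j₀, hj₀K, hj₀σ⟩ := hcond hi
              exact ⟨j₀, Finset.mem_insert_of_mem hj₀K, hj₀σ⟩
          obtain ⟨j₀, hj₀K', hj₀σ⟩ := this
          have := Finset.single_le_sum
            (f := fun j => if j ∈ σ then ∏ v ∈ σ, lam v else 0)
            (fun k _ => by (try dsimp only); split_ifs; exacts [(hppos σ).le, le_rfl]) hj₀K'
          simpa [hj₀σ] using this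
      _ = ∑ j ∈ K', ∑ σ ∈ Ω.filter (fun s => ¬(i ∉ s ∧ ∀ j ∈ K, j ∉ s)),
            (if j ∈ σ then ∏ v ∈ σ, lam v else 0) := Finset.sum_comm
      _ ≤ ∑ j ∈ K', ∑ σ ∈ Ω.filter (fun s => j ∈ s), ∏ v ∈ σ, lam v := by
          apply Finset.sum_le_sum
          intro j _
          rw [← Finset.sum_filter]
          apply Finset.sum_le_sum_of_subset_of_nonneg
          · intro σ hσ
            simp only [Finset.mem_filter] at hσ ⊢
            exact ⟨hσ.1.1, hσ.2⟩
          · intro σ _ _; exact (hppos σ).le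
  have hKsplit : ∑ j ∈ K', ∑ σ ∈ Ω.filter (fun s => j ∈ s), ∏ v ∈ σ, lam v
      = serviceRate G lam i * Z + ∑ j ∈ K, serviceRate G lam j * Z := by
    rw [hK', Finset.sum_insert (by simp [hK])]
    rw [hNj i]
    congr 1
    exact Finset.sum_congr rfl fun j _ => hNj j
  -- rates in terms of μ
  have hsν : ∀ j, serviceRate G lam j = μ j / (G.maxDegree : ℝ) := by
    intro j
    rw [hs j, hνdef]
    show 1 / (G.maxDegree : ℝ) * μ j = μ j / (G.maxDegree : ℝ)
    ring
  have hnb := coSched_nbhd_bound G i μ'' hμco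
  have hsum : ∑ j ∈ K, serviceRate G lam j ≤ 1 - μ'' i := by
    have h1 : ∑ j ∈ K, serviceRate G lam j ≤ (∑ j ∈ K, μ'' j) / (G.maxDegree : ℝ) := by
      rw [Finset.sum_div]
      apply Finset.sum_le_sum
      intro j _
      rw [hsν j]
      exact (div_le_div_iff_of_pos_right hΔpos).mpr (hμlt j).le
    have h2 : (∑ j ∈ K, μ'' j) / (G.maxDegree : ℝ) ≤ 1 - μ'' i := by
      rw [div_le_iff₀ hΔpos]
      rw [← hK] at hnb
      nlinarith [hnb]
    linarith
  -- final arithmetic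
  have hμi : (G.maxDegree : ℝ) * serviceRate G lam i < μ'' i := by
    rw [hsν i]
    rw [mul_div_cancel₀ _ (ne_of_gt hΔpos)]
    exact hμlt i
  have hZle : Z ≤ B + serviceRate G lam i * Z + (∑ j ∈ K, serviceRate G lam j) * Z := by
    rw [Finset.sum_mul]
    calc Z = B + ∑ σ ∈ Ω.filter (fun s => ¬(i ∉ s ∧ ∀ j ∈ K, j ∉ s)), ∏ v ∈ σ, lam v :=
        hZsplit.symm
      _ ≤ B + (serviceRate G lam i * Z + ∑ j ∈ K, serviceRate G lam j * Z) := by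
          have := le_trans hR (le_of_eq hKsplit)
          linarith
      _ = B + serviceRate G lam i * Z + ∑ j ∈ K, serviceRate G lam j * Z := by ring
  have hlamB : lam i * B = serviceRate G lam i * Z := by
    rw [← hNi, hNj i]
  have hsiZpos : 0 < serviceRate G lam i * Z := by
    rw [← hlamB]; exact mul_pos (hlam i) hBpos
  have hsi : 0 < serviceRate G lam i := by nlinarith [hZpos]
  have hBgt : Z * (((G.maxDegree : ℝ) - 1) * serviceRate G lam i) < B := by
    nlinarith [mul_le_mul_of_nonneg_right hsum hZpos.le,
      mul_lt_mul_of_pos_left hμi hZpos, hZle]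
  have hfin : lam i * ((G.maxDegree : ℝ) - 1) < 1 := by
    have h2 := mul_lt_mul_of_pos_left hBgt (hlam i)
    rw [hlamB] at h2
    nlinarith [hsiZpos, h2]
  rw [le_div_iff₀ (by linarith : (0:ℝ) < (G.maxDegree : ℝ) - 1)]
  linarith
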